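/- Let $k \in L^2([0,1])$ and $\eta \in (0,1)$. Then $\int_0^1 \int_0^1 \frac{1}{|t-s|^{1+2\eta}} \int_{s \wedge t}^{s \vee t} k(s \vee t - u)^2 \, du \, ds \, dt \le \frac{1}{\eta} \int_0^1 k(t)^2 t^{-2\eta} \, dt.$ -/

import Mathlib

open MeasureTheory Set
open scoped ENNReal

/-- Sobolev–Slobodeckij bound: for `k ∈ L²([0,1])` and `η ∈ (0,1)`,
`∫₀¹∫₀¹ |t-s|^{-(1+2η)} ∫_{s∧t}^{s∨t} k(s∨t - u)² du ds dt ≤ (1/η) ∫₀¹ k(t)² t^{-2η} dt`,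
stated in `ℝ≥0∞` so that both sides may be infinite. -/
private lemma inner_sub (k : ℝ → ℝ) (hkm : Measurable k) (m M : ℝ) :
    (∫⁻ u in Ioc m M, ENNReal.ofReal (k (M - u) ^ 2)) =
      ∫⁻ v in Ioo 0 (M - m), ENNReal.ofReal (k v ^ 2) := by
  have emb : MeasurableEmbedding (fun v : ℝ => M - v) :=
    (MeasurableEquiv.subLeft M).measurableEmbedding
  have mp : MeasurePreserving (fun v : ℝ => M - v) volume volume :=
    Measure.measurePreserving_sub_left volume M
  have h := mp.setLIntegral_comp_preimage_emb emb
      (fun u => ENNReal.ofReal (k (M - u) ^ 2)) (Ioc m M)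
  have hpre : (fun v : ℝ => M - v) ⁻¹' (Ioc m M) = Ico 0 (M - m) := by
    ext v
    simp only [mem_preimage, mem_Ioc, mem_Ico]
    constructor <;> rintro ⟨h1, h2⟩ <;> constructor <;> linarith
  rw [hpre] at h
  simp only [sub_sub_cancel] at h
  rw [← h, restrict_Ioo_eq_restrict_Ico]

private lemma Ioi_lint (η : ℝ) (hη0 : 0 < η) {v : ℝ} (hv : 0 < v) :
    (∫⁻ r in Ioi v, ENNReal.ofReal (r ^ (-(1 + 2 * η)))) =
      ENNReal.ofReal (v ^ (-(2 * η)) / (2 * η)) := by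
  have ha : -(1 + 2 * η) < -1 := by linarith
  have hint : IntegrableOn (fun r : ℝ => r ^ (-(1 + 2 * η))) (Ioi v) :=
    integrableOn_Ioi_rpow_of_lt ha hv
  have hnn : 0 ≤ᵐ[volume.restrict (Ioi v)] fun r : ℝ => r ^ (-(1 + 2 * η)) := by
    filter_upwards [ae_restrict_mem measurableSet_Ioi] with r hr
    exact Real.rpow_nonneg (le_of_lt (hv.trans hr)) _
  rw [← ofReal_integral_eq_lintegral_ofReal hint hnn, integral_Ioi_rpow_of_lt ha hv]
  congr 1
  rw [show -(1 + 2 * η) + 1 = -(2 * η) by ring, neg_div_neg_eq]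

private lemma s_bound (η : ℝ) (hη0 : 0 < η) (t v : ℝ) (hv : 0 < v) :
    (∫⁻ s in Ioc (0:ℝ) 1,
        (if v < |t - s| then (ENNReal.ofReal (|t - s| ^ (1 + 2 * η)))⁻¹ else 0))
      ≤ ENNReal.ofReal (v ^ (-(2 * η)) / η) := by
  set p : ℝ := 1 + 2 * η with hp
  set C1 : ℝ → ℝ≥0∞ :=
    (Iio (t - v)).indicator fun s => ENNReal.ofReal ((t - s) ^ (-p)) with hC1
  set C2 : ℝ → ℝ≥0∞ :=
    (Ioi (t + v)).indicator fun s => ENNReal.ofReal ((s - t) ^ (-p)) with hC2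
  have hmC1 : Measurable C1 :=
    (((measurable_const.sub measurable_id).pow_const (-p)).ennreal_ofReal).indicator
      measurableSet_Iio
  have hpt : ∀ s, (if v < |t - s| then (ENNReal.ofReal (|t - s| ^ p))⁻¹ else 0) ≤ C1 s + C2 s := by
    intro s
    split_ifs with h
    · rcases lt_abs.mp h with h1 | h1
      · have hs : s ∈ Iio (t - v) := by simp only [mem_Iio]; linarith
        have habs : |t - s| = t - s := abs_of_pos (by linarith)
        have he : (ENNReal.ofReal (|t - s| ^ p))⁻¹ = ENNReal.ofReal ((t - s) ^ (-p)) := by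
          rw [habs, Real.rpow_neg (by linarith : (0:ℝ) ≤ t - s),
            ENNReal.ofReal_inv_of_pos (Real.rpow_pos_of_pos (by linarith) _)]
        rw [he]
        refine le_add_of_le_of_nonneg ?_ zero_le
        rw [hC1, indicator_of_mem hs]
      · have hs : s ∈ Ioi (t + v) := by simp only [mem_Ioi]; linarith
        have habs : |t - s| = s - t := by rw [abs_sub_comm]; exact abs_of_pos (by linarith)
        have he : (ENNReal.ofReal (|t - s| ^ p))⁻¹ = ENNReal.ofReal ((s - t) ^ (-p)) := by
          rw [habs, Real.rpow_neg (by linarith : (0:ℝ) ≤ s - t),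
            ENNReal.ofReal_inv_of_pos (Real.rpow_pos_of_pos (by linarith) _)]
        rw [he]
        refine le_add_of_nonneg_of_le zero_le ?_
        rw [hC2, indicator_of_mem hs]
    · exact zero_le
  have hI1 : (∫⁻ s, C1 s) = ∫⁻ r in Ioi v, ENNReal.ofReal (r ^ (-p)) := by
    rw [hC1, lintegral_indicator measurableSet_Iio]
    have mp := Measure.measurePreserving_sub_left (volume : Measure ℝ) t
    have emb : MeasurableEmbedding (fun r : ℝ => t - r) :=
      (MeasurableEquiv.subLeft t).measurableEmbedding
    have h := mp.setLIntegral_comp_preimage_emb emb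
        (fun s => ENNReal.ofReal ((t - s) ^ (-p))) (Iio (t - v))
    have hpre : (fun r : ℝ => t - r) ⁻¹' (Iio (t - v)) = Ioi v := by
      ext r; simp only [mem_preimage, mem_Iio, mem_Ioi]; constructor <;> intro <;> linarith
    rw [hpre] at h
    simp only [sub_sub_cancel] at h
    exact h.symm
  have hI2 : (∫⁻ s, C2 s) = ∫⁻ r in Ioi v, ENNReal.ofReal (r ^ (-p)) := by
    rw [hC2, lintegral_indicator measurableSet_Ioi]
    have mp := measurePreserving_add_right (volume : Measure ℝ) t
    have emb : MeasurableEmbedding (fun r : ℝ => r + t) :=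
      (MeasurableEquiv.addRight t).measurableEmbedding
    have h := mp.setLIntegral_comp_preimage_emb emb
        (fun s => ENNReal.ofReal ((s - t) ^ (-p))) (Ioi (t + v))
    have hpre : (fun r : ℝ => r + t) ⁻¹' (Ioi (t + v)) = Ioi v := by
      ext r; simp only [mem_preimage, mem_Ioi]; constructor <;> intro <;> linarith
    rw [hpre] at h
    simp only [add_sub_cancel_right] at h
    exact h.symm
  have hIoi : (∫⁻ r in Ioi v, ENNReal.ofReal (r ^ (-p))) =
      ENNReal.ofReal (v ^ (-(2 * η)) / (2 * η)) := by
    rw [hp]; exact Ioi_lint η hη0 hv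
  calc (∫⁻ s in Ioc (0:ℝ) 1,
        (if v < |t - s| then (ENNReal.ofReal (|t - s| ^ p))⁻¹ else 0))
      ≤ ∫⁻ s in Ioc (0:ℝ) 1, (C1 s + C2 s) := lintegral_mono hpt
    _ ≤ ∫⁻ s, (C1 s + C2 s) := setLIntegral_le_lintegral _ _
    _ = (∫⁻ s, C1 s) + ∫⁻ s, C2 s := lintegral_add_left hmC1 _
    _ = ENNReal.ofReal (v ^ (-(2 * η)) / (2 * η)) + ENNReal.ofReal (v ^ (-(2 * η)) / (2 * η)) := by
        rw [hI1, hI2, hIoi]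
    _ = ENNReal.ofReal (v ^ (-(2 * η)) / η) := by
        rw [← ENNReal.ofReal_add (by positivity) (by positivity)]
        congr 1
        field_simp
        ring

/-- Sobolev–Slobodeckij bound: for `k ∈ L²([0,1])` and `η ∈ (0,1)`,
`∫₀¹∫₀¹ |t-s|^{-(1+2η)} ∫_{s∧t}^{s∨t} k(s∨t - u)² du ds dt ≤ (1/η) ∫₀¹ k(t)² t^{-2η} dt`,
stated in `ℝ≥0∞` so that both sides may be infinite. -/

theorem stmt3 (k : ℝ → ℝ) (η : ℝ) (hη : η ∈ Ioo (0:ℝ) 1)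
    (hkm : Measurable k)
    (hk : MemLp k 2 (volume.restrict (Ioc (0:ℝ) 1))) :
    (∫⁻ t in Ioc (0:ℝ) 1, ∫⁻ s in Ioc (0:ℝ) 1,
        (∫⁻ u in Ioc (min s t) (max s t), ENNReal.ofReal (k (max s t - u) ^ 2)) /
          ENNReal.ofReal (|t - s| ^ (1 + 2 * η)))
      ≤ ENNReal.ofReal (1 / η) *
          ∫⁻ t in Ioc (0:ℝ) 1, ENNReal.ofReal (k t ^ 2 * t ^ (-(2 * η))) := by
  obtain ⟨hη0, hη1⟩ := hη
  set p : ℝ := 1 + 2 * η with hp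
  set f : ℝ → ℝ≥0∞ := fun v => ENNReal.ofReal (k v ^ 2) with hf
  have hfm : Measurable f := (hkm.pow_const 2).ennreal_ofReal
  set C : ℝ≥0∞ := ENNReal.ofReal (1 / η) *
      ∫⁻ v in Ioc (0:ℝ) 1, ENNReal.ofReal (k v ^ 2 * v ^ (-(2 * η))) with hC
  have key : ∀ t ∈ Ioc (0:ℝ) 1,
      (∫⁻ s in Ioc (0:ℝ) 1,
        (∫⁻ u in Ioc (min s t) (max s t), ENNReal.ofReal (k (max s t - u) ^ 2)) /
          ENNReal.ofReal (|t - s| ^ p)) ≤ C := by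
    intro t ht
    set G : ℝ → ℝ → ℝ≥0∞ := fun s v =>
      (Ioo 0 |t - s|).indicator (fun v' => f v' * (ENNReal.ofReal (|t - s| ^ p))⁻¹) v with hG
    have stepA : ∀ s : ℝ,
        (∫⁻ u in Ioc (min s t) (max s t), ENNReal.ofReal (k (max s t - u) ^ 2)) /
          ENNReal.ofReal (|t - s| ^ p) = ∫⁻ v, G s v := by
      intro s
      have hd : max s t - min s t = |t - s| := by
        rw [max_sub_min_eq_abs, abs_sub_comm]
      rw [inner_sub k hkm (min s t) (max s t), hd, div_eq_mul_inv,
        ← lintegral_mul_const'' _ hfm.aemeasurable, hG,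
        ← lintegral_indicator measurableSet_Ioo]
    have stepAall : (∫⁻ s in Ioc (0:ℝ) 1,
        (∫⁻ u in Ioc (min s t) (max s t), ENNReal.ofReal (k (max s t - u) ^ 2)) /
          ENNReal.ofReal (|t - s| ^ p)) = ∫⁻ s in Ioc (0:ℝ) 1, ∫⁻ v, G s v :=
      lintegral_congr stepA
    have hswap : (∫⁻ s in Ioc (0:ℝ) 1, ∫⁻ v, G s v) =
        ∫⁻ v, ∫⁻ s in Ioc (0:ℝ) 1, G s v := by
      apply lintegral_lintegral_swap
      have hset : MeasurableSet {q : ℝ × ℝ | 0 < q.2 ∧ q.2 < |t - q.1|} :=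
        (measurableSet_lt measurable_const measurable_snd).inter
          (measurableSet_lt measurable_snd ((measurable_const.sub measurable_fst).abs))
      have hH : Measurable fun q : ℝ × ℝ =>
          f q.2 * (ENNReal.ofReal (|t - q.1| ^ p))⁻¹ :=
        (hfm.comp measurable_snd).mul
          (((measurable_const.sub measurable_fst).abs.pow_const p).ennreal_ofReal.inv)
      have huncurry : Function.uncurry G =
          ({q : ℝ × ℝ | 0 < q.2 ∧ q.2 < |t - q.1|}).indicator
            (fun q => f q.2 * (ENNReal.ofReal (|t - q.1| ^ p))⁻¹) := by
        funext q
        rcases q with ⟨s, v⟩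
        simp [Function.uncurry, hG, Set.indicator_apply, mem_Ioo, mem_setOf_eq]
      rw [huncurry]
      exact (hH.indicator hset).aemeasurable
    set D : ℝ → ℝ≥0∞ := (Ioo (0:ℝ) 1).indicator
      (fun v => ENNReal.ofReal (k v ^ 2 * v ^ (-(2 * η))) * ENNReal.ofReal (1 / η)) with hD
    have claim : ∀ v, (∫⁻ s in Ioc (0:ℝ) 1, G s v) ≤ D v := by
      intro v
      by_cases hv : v ∈ Ioo (0:ℝ) 1
      · obtain ⟨hv0, hv1⟩ := hv
        have hGs : ∀ s, G s v =
            f v * (if v < |t - s| then (ENNReal.ofReal (|t - s| ^ p))⁻¹ else 0) := by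
          intro s
          rw [hG]
          by_cases h : v < |t - s|
          · simp [Set.indicator_apply, mem_Ioo, hv0, h]
          · simp [Set.indicator_apply, mem_Ioo, h]
        calc (∫⁻ s in Ioc (0:ℝ) 1, G s v)
            = f v * ∫⁻ s in Ioc (0:ℝ) 1,
                (if v < |t - s| then (ENNReal.ofReal (|t - s| ^ p))⁻¹ else 0) := by
              simp_rw [hGs]
              exact lintegral_const_mul' _ _ ENNReal.ofReal_ne_top
          _ ≤ f v * ENNReal.ofReal (v ^ (-(2 * η)) / η) :=
              mul_le_mul_right (s_bound η hη0 t v hv0) _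
          _ = D v := by
              have hvmem : v ∈ Ioo (0:ℝ) 1 := ⟨hv0, hv1⟩
              rw [hD, Set.indicator_of_mem hvmem, hf,
                ← ENNReal.ofReal_mul (by positivity),
                ← ENNReal.ofReal_mul (by positivity)]
              congr 1
              field_simp
      · have hzero : ∀ s ∈ Ioc (0:ℝ) 1, G s v = 0 := by
          intro s hs
          apply indicator_of_notMem
          have h' : v ≤ 0 ∨ 1 ≤ v := by
            rcases le_or_gt v 0 with h | h
            · exact Or.inl h
            · refine Or.inr ?_
              by_contra hlt
              exact hv ⟨h, lt_of_not_ge hlt⟩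
          simp only [mem_Ioo, not_and_or, not_lt]
          rcases h' with h | h
          · exact Or.inl h
          · refine Or.inr ?_
            have h1 : (1:ℝ) ≤ v := h
            have habs : |t - s| < 1 := by
              rw [abs_sub_lt_iff]
              constructor <;> [linarith [ht.1, ht.2, hs.1, hs.2];
                linarith [ht.1, ht.2, hs.1, hs.2]]
            linarith
        rw [setLIntegral_congr_fun measurableSet_Ioc hzero]
        simp
    calc (∫⁻ s in Ioc (0:ℝ) 1,
        (∫⁻ u in Ioc (min s t) (max s t), ENNReal.ofReal (k (max s t - u) ^ 2)) /
          ENNReal.ofReal (|t - s| ^ p))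
        = ∫⁻ v, ∫⁻ s in Ioc (0:ℝ) 1, G s v := by rw [stepAall, hswap]
      _ ≤ ∫⁻ v, D v := lintegral_mono claim
      _ = ∫⁻ v in Ioo (0:ℝ) 1,
            ENNReal.ofReal (k v ^ 2 * v ^ (-(2 * η))) * ENNReal.ofReal (1 / η) := by
          rw [hD, lintegral_indicator measurableSet_Ioo]
      _ = (∫⁻ v in Ioc (0:ℝ) 1, ENNReal.ofReal (k v ^ 2 * v ^ (-(2 * η)))) *
            ENNReal.ofReal (1 / η) := by
          rw [restrict_Ioo_eq_restrict_Ioc]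
          exact lintegral_mul_const' _ _ ENNReal.ofReal_ne_top
      _ = C := by rw [hC, mul_comm]
  calc (∫⁻ t in Ioc (0:ℝ) 1, ∫⁻ s in Ioc (0:ℝ) 1,
        (∫⁻ u in Ioc (min s t) (max s t), ENNReal.ofReal (k (max s t - u) ^ 2)) /
          ENNReal.ofReal (|t - s| ^ (1 + 2 * η)))
      ≤ ∫⁻ _t in Ioc (0:ℝ) 1, C := by
        refine lintegral_mono_ae ?_
        filter_upwards [ae_restrict_mem measurableSet_Ioc] with t ht
        exact key t ht
    _ = C * volume (Ioc (0:ℝ) 1) := setLIntegral_const _ _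
    _ = C := by
        rw [Real.volume_Ioc]
        norm_num
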